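/- In the real q-Weyl algebra A_q(n;R), the elements Q_j := λ^{-1}(y_j x_j - x_j y_j) (j ≤ n), Q_{n+1} := 1, satisfy: Q_k y_j = y_j Q_k for j < k, Q_k y_j = q² y_j Q_k for j ≥ k, Q_k x_j = x_j Q_k for j < k, Q_k x_j = q^{-2} x_j Q_k for j ≥ k; in particular all Q_k, Q_l commute. -/

import Mathlib

/-- In the real q-Weyl algebra A_q(n;ℝ), the elements
Q_j = λ⁻¹(y_jx_j - x_jy_j), Q_{n+1} = 1, satisfy Q_k y_j = y_j Q_k (j < k),
Q_k y_j = q² y_j Q_k (j ≥ k), Q_k x_j = x_j Q_k (j < k), Q_k x_j = q⁻² x_j Q_k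
(j ≥ k); in particular all Q_k, Q_l commute. -/
theorem stmt11 {A : Type*} [Ring A] [Algebra ℂ A] [StarRing A] [StarModule ℂ A]
    (n : ℕ) (hn : 1 ≤ n)
    (q : ℂ) (hq : ‖q‖ = 1) (hq4 : q ^ 4 ≠ 1)
    (lam : ℂ) (hlam : lam = q - q⁻¹)
    (x y : ℕ → A)
    (hxs : ∀ k, 1 ≤ k → k ≤ n → star (x k) = x k)
    (hys : ∀ k, 1 ≤ k → k ≤ n → star (y k) = y k)
    (hyy : ∀ k l, 1 ≤ k → k < l → l ≤ n → y k * y l = q • (y l * y k))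
    (hxx : ∀ k l, 1 ≤ k → k < l → l ≤ n → x k * x l = q⁻¹ • (x l * x k))
    (hxy : ∀ k l, 1 ≤ k → k ≤ n → 1 ≤ l → l ≤ n → k ≠ l →
      x l * y k = q • (y k * x l))
    (hxyk : ∀ k, 1 ≤ k → k < n →
      x k * y k = q ^ 2 • (y k * x k)
        - (1 - q ^ 2) • (∑ j ∈ Finset.Ioc k n, q ^ (j - k) • (y j * x j))
        + ((1 - q ^ 2) * q ^ (n - k)) • (1 : A))
    (hxyn : x n * y n = q ^ 2 • (y n * x n) + (1 - q ^ 2) • (1 : A))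
    (Q : ℕ → A)
    (hQdef : ∀ k, 1 ≤ k → k ≤ n → Q k = lam⁻¹ • (y k * x k - x k * y k))
    (hQtop : Q (n + 1) = 1) :
    (∀ j k, 1 ≤ j → j ≤ n → 1 ≤ k → k ≤ n →
      (j < k → Q k * y j = y j * Q k ∧ Q k * x j = x j * Q k) ∧
      (k ≤ j → Q k * y j = q ^ 2 • (y j * Q k) ∧
        Q k * x j = q⁻¹ ^ 2 • (x j * Q k))) ∧
    (∀ k l, 1 ≤ k → k ≤ n + 1 → 1 ≤ l → l ≤ n + 1 → Q k * Q l = Q l * Q k) := by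
  -- basic scalar facts
  have hq0 : q ≠ 0 := by
    intro h; rw [h] at hq; simp at hq
  have hq2 : q ^ 2 ≠ 1 := by
    intro h; apply hq4
    have h4 : q ^ 4 = (q ^ 2) ^ 2 := by ring
    rw [h4, h, one_pow]
  have hlam0 : lam ≠ 0 := by
    rw [hlam]; intro h
    apply hq2
    have h3 : q * (q - q⁻¹) = 0 := by rw [h, mul_zero]
    rw [mul_sub, mul_inv_cancel₀ hq0] at h3
    rw [pow_two, sub_eq_zero.mp h3]
  have hkey : lam⁻¹ * (1 - q ^ 2) = -q := by
    have h1 : lam * q = q ^ 2 - 1 := by rw [hlam, sub_mul, inv_mul_cancel₀ hq0]; ring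
    have h4 : lam⁻¹ * (1 - q ^ 2) = lam⁻¹ * (lam * (-q)) := by
      rw [show lam * (-q) = -(lam * q) by ring, h1]; ring
    rw [h4, ← mul_assoc, inv_mul_cancel₀ hlam0, one_mul]
  have hqq : q⁻¹ ^ 2 * q ^ 2 = 1 := by field_simp
  have hqq' : q ^ 2 * q⁻¹ ^ 2 = 1 := by field_simp
  -- basic swap lemmas
  have swapyy : ∀ j m, 1 ≤ j → j < m → m ≤ n → y m * y j = q⁻¹ • (y j * y m) := by
    intro j m h1 h2 h3
    rw [hyy j m h1 h2 h3, inv_smul_smul₀ hq0]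
  have swapxx : ∀ j m, 1 ≤ j → j < m → m ≤ n → x m * x j = q • (x j * x m) := by
    intro j m h1 h2 h3
    rw [hxx j m h1 h2 h3, smul_inv_smul₀ hq0]
  have swapyx : ∀ k l, 1 ≤ k → k ≤ n → 1 ≤ l → l ≤ n → k ≠ l →
      y l * x k = q⁻¹ • (x k * y l) := by
    intro k l h1 h2 h3 h4 h5
    rw [hxy l k h3 h4 h1 h2 (by omega), inv_smul_smul₀ hq0]
  -- composite swap lemmas, j < m
  have c1 : ∀ j m, 1 ≤ j → j < m → m ≤ n → y m * x m * y j = y j * (y m * x m) := by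
    intro j m h1 h2 h3
    calc y m * x m * y j = y m * (x m * y j) := by rw [mul_assoc]
      _ = q • (y m * (y j * x m)) := by
          rw [hxy j m h1 (by omega) (by omega) h3 (by omega), mul_smul_comm]
      _ = q • ((y m * y j) * x m) := by rw [← mul_assoc]
      _ = q • ((q⁻¹ • (y j * y m)) * x m) := by rw [swapyy j m h1 h2 h3]
      _ = y j * (y m * x m) := by
          rw [smul_mul_assoc, smul_smul, mul_inv_cancel₀ hq0, one_smul, mul_assoc]
  have c2 : ∀ j m, 1 ≤ j → j < m → m ≤ n → x m * y m * y j = y j * (x m * y m) := by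
    intro j m h1 h2 h3
    calc x m * y m * y j = x m * (y m * y j) := by rw [mul_assoc]
      _ = q⁻¹ • (x m * (y j * y m)) := by rw [swapyy j m h1 h2 h3, mul_smul_comm]
      _ = q⁻¹ • ((x m * y j) * y m) := by rw [← mul_assoc]
      _ = q⁻¹ • ((q • (y j * x m)) * y m) := by
          rw [hxy j m h1 (by omega) (by omega) h3 (by omega)]
      _ = y j * (x m * y m) := by
          rw [smul_mul_assoc, smul_smul, inv_mul_cancel₀ hq0, one_smul, mul_assoc]
  have c3 : ∀ j m, 1 ≤ j → j < m → m ≤ n → y m * x m * x j = x j * (y m * x m) := by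
    intro j m h1 h2 h3
    calc y m * x m * x j = y m * (x m * x j) := by rw [mul_assoc]
      _ = q • (y m * (x j * x m)) := by rw [swapxx j m h1 h2 h3, mul_smul_comm]
      _ = q • ((y m * x j) * x m) := by rw [← mul_assoc]
      _ = q • ((q⁻¹ • (x j * y m)) * x m) := by
          rw [swapyx j m h1 (by omega) (by omega) h3 (by omega)]
      _ = x j * (y m * x m) := by
          rw [smul_mul_assoc, smul_smul, mul_inv_cancel₀ hq0, one_smul, mul_assoc]
  have c4 : ∀ j m, 1 ≤ j → j < m → m ≤ n → x m * y m * x j = x j * (x m * y m) := by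
    intro j m h1 h2 h3
    calc x m * y m * x j = x m * (y m * x j) := by rw [mul_assoc]
      _ = q⁻¹ • (x m * (x j * y m)) := by
          rw [swapyx j m h1 (by omega) (by omega) h3 (by omega), mul_smul_comm]
      _ = q⁻¹ • ((x m * x j) * y m) := by rw [← mul_assoc]
      _ = q⁻¹ • ((q • (x j * x m)) * y m) := by rw [swapxx j m h1 h2 h3]
      _ = x j * (x m * y m) := by
          rw [smul_mul_assoc, smul_smul, inv_mul_cancel₀ hq0, one_smul, mul_assoc]
  -- composite swap lemmas, k < j
  have c5 : ∀ k j, 1 ≤ k → k < j → j ≤ n →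
      y k * x k * y j = q ^ 2 • (y j * (y k * x k)) := by
    intro k j h1 h2 h3
    rw [pow_two, mul_smul]
    calc y k * x k * y j = y k * (x k * y j) := by rw [mul_assoc]
      _ = q • (y k * (y j * x k)) := by
          rw [hxy j k (by omega) h3 h1 (by omega) (by omega), mul_smul_comm]
      _ = q • ((y k * y j) * x k) := by rw [← mul_assoc]
      _ = q • ((q • (y j * y k)) * x k) := by rw [hyy k j h1 h2 h3]
      _ = q • (q • (y j * (y k * x k))) := by rw [smul_mul_assoc, mul_assoc]
  have c6 : ∀ k j, 1 ≤ k → k < j → j ≤ n →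
      y k * x k * x j = q⁻¹ ^ 2 • (x j * (y k * x k)) := by
    intro k j h1 h2 h3
    rw [pow_two, mul_smul]
    calc y k * x k * x j = y k * (x k * x j) := by rw [mul_assoc]
      _ = q⁻¹ • (y k * (x j * x k)) := by rw [hxx k j h1 h2 h3, mul_smul_comm]
      _ = q⁻¹ • ((y k * x j) * x k) := by rw [← mul_assoc]
      _ = q⁻¹ • ((q⁻¹ • (x j * y k)) * x k) := by
          rw [swapyx j k (by omega) h3 h1 (by omega) (by omega)]
      _ = q⁻¹ • (q⁻¹ • (x j * (y k * x k))) := by rw [smul_mul_assoc, mul_assoc]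
  -- Q commutes with earlier generators
  have Qy_lt : ∀ j k, 1 ≤ j → j < k → k ≤ n + 1 → Q k * y j = y j * Q k := by
    intro j k h1 h2 h3
    rcases eq_or_lt_of_le h3 with he | hlt
    · rw [he, hQtop, one_mul, mul_one]
    · have hk : k ≤ n := by omega
      rw [hQdef k (by omega) hk, smul_mul_assoc, mul_smul_comm, sub_mul, mul_sub,
        c1 j k h1 h2 hk, c2 j k h1 h2 hk]
  have Qx_lt : ∀ j k, 1 ≤ j → j < k → k ≤ n + 1 → Q k * x j = x j * Q k := by
    intro j k h1 h2 h3
    rcases eq_or_lt_of_le h3 with he | hlt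
    · rw [he, hQtop, one_mul, mul_one]
    · have hk : k ≤ n := by omega
      rw [hQdef k (by omega) hk, smul_mul_assoc, mul_smul_comm, sub_mul, mul_sub,
        c3 j k h1 h2 hk, c4 j k h1 h2 hk]
  -- closed sum formula for Q k
  have sumf : ∀ d k, 1 ≤ k → k ≤ n + 1 → n + 1 ≤ k + d →
      Q k = (q ^ (n + 1 - k)) • (1 : A)
        - ∑ i ∈ Finset.Icc k n, q ^ (i + 1 - k) • (y i * x i) := by
    intro d
    induction d with
    | zero =>
      intro k h1 h2 h3
      have hk : k = n + 1 := by omega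
      subst hk
      rw [hQtop, Finset.Icc_eq_empty (by omega), Finset.sum_empty, sub_zero,
        Nat.sub_self, pow_zero, one_smul]
    | succ d ih =>
      intro k h1 h2 h3
      by_cases hk : k = n + 1
      · subst hk
        rw [hQtop, Finset.Icc_eq_empty (by omega), Finset.sum_empty, sub_zero,
          Nat.sub_self, pow_zero, one_smul]
      · have hkn : k ≤ n := by omega
        have ih1 := ih (k + 1) (by omega) (by omega) (by omega)
        rw [Finset.Icc_add_one_left_eq_Ioc] at ih1
        rw [show n + 1 - (k + 1) = n - k by omega] at ih1
        have ih2 : Q (k + 1) = q ^ (n - k) • (1 : A)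
            - ∑ i ∈ Finset.Ioc k n, q ^ (i - k) • (y i * x i) := by
          rw [ih1]
          congr 1
          apply Finset.sum_congr rfl
          intro i hi
          rw [show i + 1 - (k + 1) = i - k by omega]
        have hstar : x k * y k = q ^ 2 • (y k * x k) + (1 - q ^ 2) • Q (k + 1) := by
          by_cases hkn' : k = n
          · subst hkn'; rw [hxyn, hQtop]
          · have h5 := hxyk k h1 (by omega)
            have hS : ∑ j ∈ Finset.Ioc k n, q ^ (j - k) • (y j * x j)
                = q ^ (n - k) • (1 : A) - Q (k + 1) := by
              rw [ih2, sub_sub_cancel]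
            rw [h5, hS]
            module
        have hrec : Q k = q • Q (k + 1) - q • (y k * x k) := by
          rw [hQdef k h1 hkn, hstar]
          have e1 : y k * x k - (q ^ 2 • (y k * x k) + (1 - q ^ 2) • Q (k + 1))
              = (1 - q ^ 2) • (y k * x k - Q (k + 1)) := by module
          rw [e1, smul_smul, hkey]
          module
        have hsplit : ∑ i ∈ Finset.Icc k n, q ^ (i + 1 - k) • (y i * x i)
            = q • (y k * x k) + ∑ i ∈ Finset.Ioc k n, q ^ (i + 1 - k) • (y i * x i) := by
          rw [← Finset.Ioc_insert_left hkn, Finset.sum_insert Finset.left_notMem_Ioc]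
          congr 2
          rw [show k + 1 - k = 1 by omega, pow_one]
        have hmul : ∑ i ∈ Finset.Ioc k n, q ^ (i + 1 - k) • (y i * x i)
            = q • ∑ i ∈ Finset.Ioc k n, q ^ (i - k) • (y i * x i) := by
          rw [Finset.smul_sum]
          apply Finset.sum_congr rfl
          intro i hi
          rw [smul_smul, ← pow_succ']
          congr 2
          have := (Finset.mem_Ioc.mp hi).1
          omega
        have hpow : q ^ (n + 1 - k) = q * q ^ (n - k) := by
          rw [← pow_succ']
          congr 1
          omega
        rw [hrec, ih2, hsplit, hmul, hpow]
        module
  -- global versions of star and recursion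
  have ih2g : ∀ k, 1 ≤ k → k ≤ n → Q (k + 1) = q ^ (n - k) • (1 : A)
      - ∑ i ∈ Finset.Ioc k n, q ^ (i - k) • (y i * x i) := by
    intro k h1 h2
    have ih1 := sumf (n + 1) (k + 1) (by omega) (by omega) (by omega)
    rw [Finset.Icc_add_one_left_eq_Ioc] at ih1
    rw [show n + 1 - (k + 1) = n - k by omega] at ih1
    rw [ih1]
    congr 1
    apply Finset.sum_congr rfl
    intro i hi
    rw [show i + 1 - (k + 1) = i - k by omega]
  have hstar : ∀ k, 1 ≤ k → k ≤ n →
      x k * y k = q ^ 2 • (y k * x k) + (1 - q ^ 2) • Q (k + 1) := by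
    intro k h1 h2
    by_cases hkn' : k = n
    · subst hkn'; rw [hxyn, hQtop]
    · have h5 := hxyk k h1 (by omega)
      have hS : ∑ j ∈ Finset.Ioc k n, q ^ (j - k) • (y j * x j)
          = q ^ (n - k) • (1 : A) - Q (k + 1) := by
        rw [ih2g k h1 h2, sub_sub_cancel]
      rw [h5, hS]
      module
  have hrec : ∀ k, 1 ≤ k → k ≤ n → Q k = q • Q (k + 1) - q • (y k * x k) := by
    intro k h1 h2
    rw [hQdef k h1 h2, hstar k h1 h2]
    have e1 : y k * x k - (q ^ 2 • (y k * x k) + (1 - q ^ 2) • Q (k + 1))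
        = (1 - q ^ 2) • (y k * x k - Q (k + 1)) := by module
    rw [e1, smul_smul, hkey]
    module
  -- the diagonal case j = k
  have A2k : ∀ k, 1 ≤ k → k ≤ n →
      Q k * y k = q ^ 2 • (y k * Q k) ∧ Q k * x k = q⁻¹ ^ 2 • (x k * Q k) := by
    intro k h1 h2
    have hr := hrec k h1 h2
    have hst := hstar k h1 h2
    have hcy : Q (k + 1) * y k = y k * Q (k + 1) := Qy_lt k (k + 1) h1 (by omega) (by omega)
    have hcx : Q (k + 1) * x k = x k * Q (k + 1) := Qx_lt k (k + 1) h1 (by omega) (by omega)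
    constructor
    · rw [hr]
      simp only [sub_mul, mul_sub, smul_mul_assoc, mul_smul_comm, mul_assoc]
      rw [hcy, hst]
      simp only [mul_add, mul_smul_comm]
      module
    · have e : x k * Q k = q ^ 2 • (Q k * x k) := by
        rw [hr]
        simp only [mul_sub, sub_mul, smul_mul_assoc, mul_smul_comm, mul_assoc]
        rw [← hcx, ← mul_assoc (x k) (y k) (x k), hst]
        simp only [add_mul, smul_mul_assoc, mul_assoc]
        module
      rw [e, smul_smul, hqq, one_smul]
  -- the general case k ≤ j
  have A2 : ∀ d k, 1 ≤ k → k ≤ n → n ≤ k + d → ∀ j, k ≤ j → j ≤ n →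
      Q k * y j = q ^ 2 • (y j * Q k) ∧ Q k * x j = q⁻¹ ^ 2 • (x j * Q k) := by
    intro d
    induction d with
    | zero =>
      intro k h1 h2 h3 j hj1 hj2
      have hjk : j = k := by omega
      subst hjk
      exact A2k j h1 h2
    | succ d ih =>
      intro k h1 h2 h3 j hj1 hj2
      rcases eq_or_lt_of_le hj1 with he | hlt
      · subst he
        exact A2k k h1 h2
      · have hr := hrec k h1 h2
        have hy := (ih (k + 1) (by omega) (by omega) (by omega) j (by omega) hj2).1
        have hx := (ih (k + 1) (by omega) (by omega) (by omega) j (by omega) hj2).2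
        have hc5 := c5 k j h1 hlt hj2
        have hc6 := c6 k j h1 hlt hj2
        constructor
        · rw [hr]
          simp only [sub_mul, mul_sub, smul_mul_assoc, mul_smul_comm]
          rw [hy, hc5]
          module
        · rw [hr]
          simp only [sub_mul, mul_sub, smul_mul_assoc, mul_smul_comm]
          rw [hx, hc6]
          module
  -- Q's commute
  have Qle : ∀ k l, 1 ≤ k → k ≤ n → k ≤ l → l ≤ n → Q k * Q l = Q l * Q k := by
    intro k l h1 h2 h3 h4
    have hA := A2 n k h1 h2 (by omega) l h3 h4
    have hy := hA.1
    have hx := hA.2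
    have e1 : Q k * (y l * x l) = y l * x l * Q k := by
      calc Q k * (y l * x l) = (Q k * y l) * x l := by rw [← mul_assoc]
        _ = q ^ 2 • (y l * (Q k * x l)) := by rw [hy, smul_mul_assoc, mul_assoc]
        _ = q ^ 2 • (y l * (q⁻¹ ^ 2 • (x l * Q k))) := by rw [hx]
        _ = y l * x l * Q k := by
            rw [mul_smul_comm, smul_smul, hqq', one_smul, ← mul_assoc]
    have e2 : Q k * (x l * y l) = x l * y l * Q k := by
      calc Q k * (x l * y l) = (Q k * x l) * y l := by rw [← mul_assoc]
        _ = q⁻¹ ^ 2 • (x l * (Q k * y l)) := by rw [hx, smul_mul_assoc, mul_assoc]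
        _ = q⁻¹ ^ 2 • (x l * (q ^ 2 • (y l * Q k))) := by rw [hy]
        _ = x l * y l * Q k := by
            rw [mul_smul_comm, smul_smul, hqq, one_smul, ← mul_assoc]
    rw [hQdef l (by omega) h4, smul_mul_assoc, mul_smul_comm, sub_mul, mul_sub, e1, e2]
  refine ⟨?_, ?_⟩
  · intro j k hj1 hj2 hk1 hk2
    refine ⟨fun hlt => ⟨Qy_lt j k hj1 hlt (by omega), Qx_lt j k hj1 hlt (by omega)⟩,
      fun hle => A2 n k hk1 hk2 (by omega) j hle hj2⟩
  · intro k l hk1 hk2 hl1 hl2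
    by_cases hk : k = n + 1
    · subst hk; rw [hQtop, one_mul, mul_one]
    by_cases hl : l = n + 1
    · subst hl; rw [hQtop, one_mul, mul_one]
    rcases le_total k l with h | h
    · exact Qle k l hk1 (by omega) h (by omega)
    · exact (Qle l k hl1 (by omega) h (by omega)).symm
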